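/- Let X be a δ-hyperbolic space, x ∈ X a basepoint, and g an isometry of X with d(x,gx) ≥ 2(gx, g⁻¹x)_x + C, where C depends only on δ. Then the stable translation length satisfies τ(g) = d(x,gx) − 2(gx, g⁻¹x)_x + O(δ). -/

import Mathlib

open Filter

/-- The Gromov product `(y,z)_x = (d(x,y) + d(x,z) − d(y,z))/2`. -/
noncomputable def gromovProduct {X : Type*} [MetricSpace X] (x y z : X) : ℝ :=
  (dist x y + dist x z - dist y z) / 2

/-- The stable translation length `τ(g) = lim_n d(x, gⁿx)/n` (as a `liminf`). -/
noncomputable def stableTranslationLength {X : Type*} [MetricSpace X]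
    (g : X → X) (x : X) : ℝ :=
  atTop.liminf fun n : ℕ => dist x (g^[n] x) / n

/-- there is a constant `C` (so that the implied constants depend only
on δ) such that for every δ-hyperbolic space `X`, every isometry `g` of `X` and every
basepoint `x` with `d(x,gx) ≥ 2(gx, g⁻¹x)_x + C·δ + C`, the stable translation length
satisfies `τ(g) = d(x,gx) − 2(gx,g⁻¹x)_x + O(δ)`. -/
theorem translation_length_formula :
    ∃ C : ℝ, 0 < C ∧
      ∀ (X : Type) [MetricSpace X] (δ : ℝ), 0 ≤ δ →
        (∀ w p q r : X, min (gromovProduct w p q) (gromovProduct w q r) - δ ≤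
          gromovProduct w p r) →
        ∀ (g : X ≃ᵢ X) (x : X),
          2 * gromovProduct x (g x) (g.symm x) + C * δ + C ≤ dist x (g x) →
          |stableTranslationLength (⇑g) x -
              (dist x (g x) - 2 * gromovProduct x (g x) (g.symm x))| ≤ C * δ + C := by
  refine ⟨4, by norm_num, ?_⟩
  intro X _ δ hδ hyp g x hgap
  set L := dist x (g x) with hL
  set P := gromovProduct x (g x) (g.symm x) with hP
  have gp_nonneg : ∀ w p q : X, 0 ≤ gromovProduct w p q := by
    intro w p q
    have h := dist_triangle p w q
    rw [dist_comm p w] at h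
    unfold gromovProduct
    linarith
  have hP0 : 0 ≤ P := gp_nonneg _ _ _
  have dist_iter : ∀ (n : ℕ) (a b : X), dist (g^[n] a) (g^[n] b) = dist a b := by
    intro n
    induction n with
    | zero => intro a b; simp
    | succ m ih =>
      intro a b
      rw [Function.iterate_succ_apply', Function.iterate_succ_apply', g.dist_eq, ih]
  have gp_iter : ∀ (n : ℕ) (w p q : X),
      gromovProduct (g^[n] w) (g^[n] p) (g^[n] q) = gromovProduct w p q := by
    intro n w p q
    unfold gromovProduct
    rw [dist_iter, dist_iter, dist_iter]
  -- the local Gromov product of the orbit equals P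
  have Pfact : ∀ n : ℕ,
      gromovProduct (g^[n+1] x) (g^[n] x) (g^[n+2] x) = P := by
    intro n
    have h1 : g^[n+1] (g.symm x) = g^[n] x := by
      rw [Function.iterate_succ_apply, g.apply_symm_apply]
    have h2 : g^[n+1] (g x) = g^[n+2] x := by
      rw [← Function.iterate_succ_apply]
    have h3 := gp_iter (n+1) x (g.symm x) (g x)
    rw [h1, h2] at h3
    rw [h3]
    unfold gromovProduct
    rw [dist_comm (g.symm x) (g x)]
    rw [hP]; unfold gromovProduct; ring
  -- distance along the orbit
  have dL : ∀ n : ℕ, dist (g^[n] x) (g^[n+1] x) = L := by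
    intro n
    have : g^[n+1] x = g^[n] (g x) := Function.iterate_succ_apply _ _ _
    rw [this, dist_iter]
  -- the identity (q,p)_w + (q,w)_p = d(w,p)
  have gp_id : ∀ w p q : X,
      gromovProduct w q p + gromovProduct p q w = dist w p := by
    intro w p q
    unfold gromovProduct
    rw [dist_comm q p, dist_comm p w, dist_comm q w]
    ring
  set c : ℕ → ℝ := fun n => gromovProduct (g^[n+1] x) x (g^[n+2] x) with hc
  have hc0 : c 0 = P := by
    have := Pfact 0
    simpa [hc] using this
  -- key upper bound : c n ≤ P + δ
  have key : ∀ n : ℕ, c n ≤ P + δ := by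
    intro n
    induction n with
    | zero => rw [hc0]; linarith
    | succ m ih =>
      -- A := (y_{m+1}, x)_{y_{m+2}} is large
      have hid := gp_id (g^[m+2] x) (g^[m+1] x) x
      have hd : dist (g^[m+2] x) (g^[m+1] x) = L := by
        rw [dist_comm]; exact dL (m+1)
      rw [hd] at hid
      -- hid : gromovProduct (g^[m+2] x) x (g^[m+1] x) + c m = L
      have hA : L - P - δ ≤ gromovProduct (g^[m+2] x) x (g^[m+1] x) := by
        have : c m ≤ P + δ := ih
        linarith
      have hA' : L - P - δ ≤ gromovProduct (g^[m+2] x) (g^[m+1] x) x := by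
        have : gromovProduct (g^[m+2] x) (g^[m+1] x) x
            = gromovProduct (g^[m+2] x) x (g^[m+1] x) := by
          unfold gromovProduct; rw [dist_comm (g^[m+1] x) x]; ring
        linarith [hA, this.ge]
      have hh := hyp (g^[m+2] x) (g^[m+1] x) x (g^[m+3] x)
      rw [Pfact (m+1)] at hh
      -- hh : min (gp w y_{m+1} x) (gp w x y_{m+3}) - δ ≤ P
      have hcm1 : c (m+1) = gromovProduct (g^[m+2] x) x (g^[m+3] x) := rfl
      rw [← hcm1] at hh
      rcases min_cases (gromovProduct (g^[m+2] x) (g^[m+1] x) x) (c (m+1)) with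
        ⟨h1, h2⟩ | ⟨h1, h2⟩
      · rw [h1] at hh; linarith
      · rw [h1] at hh; linarith
  -- key lower bound : P - δ ≤ c n
  have keyl : ∀ n : ℕ, P - δ ≤ c n := by
    intro n
    match n with
    | 0 => rw [hc0]; linarith
    | Nat.succ m =>
      have hid := gp_id (g^[m+2] x) (g^[m+1] x) x
      have hd : dist (g^[m+2] x) (g^[m+1] x) = L := by
        rw [dist_comm]; exact dL (m+1)
      rw [hd] at hid
      have hA : L - P - δ ≤ gromovProduct (g^[m+2] x) x (g^[m+1] x) := by
        have := key m
        linarith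
      have hh := hyp (g^[m+2] x) x (g^[m+1] x) (g^[m+3] x)
      have hmid : gromovProduct (g^[m+2] x) (g^[m+1] x) (g^[m+3] x) = P := Pfact (m+1)
      rw [hmid] at hh
      have hcm1 : c (m+1) = gromovProduct (g^[m+2] x) x (g^[m+3] x) := rfl
      rw [← hcm1] at hh
      have hmin : P ≤ min (gromovProduct (g^[m+2] x) x (g^[m+1] x)) P :=
        le_min (by linarith) le_rfl
      linarith
  -- recursion for distances
  have rec_eq : ∀ n : ℕ,
      dist x (g^[n+2] x) = dist x (g^[n+1] x) + L - 2 * c n := by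
    intro n
    have h1 : dist (g^[n+1] x) (g^[n+2] x) = L := dL (n+1)
    have h2 : c n = (dist (g^[n+1] x) x + dist (g^[n+1] x) (g^[n+2] x)
        - dist x (g^[n+2] x)) / 2 := rfl
    rw [h1, dist_comm (g^[n+1] x) x] at h2
    linarith
  set E : ℝ := L - 2*P - 2*δ with hE
  set E' : ℝ := L - 2*P + 2*δ with hE'
  have dlow : ∀ n : ℕ, ((n:ℝ)+1) * E ≤ dist x (g^[n+1] x) := by
    intro n
    induction n with
    | zero =>
      simp only [Nat.cast_zero, zero_add, one_mul]
      have : dist x (g^[1] x) = L := by simp [hL]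
      rw [this]; linarith
    | succ m ih =>
      rw [rec_eq m]
      have := key m
      push_cast
      push_cast at ih
      linarith
  have dupp : ∀ n : ℕ, dist x (g^[n+1] x) ≤ ((n:ℝ)+1) * E' + 2*P := by
    intro n
    induction n with
    | zero =>
      simp only [Nat.cast_zero, zero_add, one_mul]
      have : dist x (g^[1] x) = L := by simp [hL]
      rw [this]; linarith
    | succ m ih =>
      rw [rec_eq m]
      have := keyl m
      push_cast
      push_cast at ih
      linarith
  -- the sequence
  set u : ℕ → ℝ := fun n => dist x (g^[n] x) / n with hu
  have hτ : stableTranslationLength (⇑g) x = atTop.liminf u := rfl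
  have hunn : ∀ n, 0 ≤ u n := fun n =>
    div_nonneg dist_nonneg (Nat.cast_nonneg n)
  have hbdd_below : atTop.IsBoundedUnder (· ≥ ·) u :=
    isBoundedUnder_of ⟨0, fun n => hunn n⟩
  have hupp_u : ∀ n : ℕ, u (n+1) ≤ E' + 2*P/((n:ℝ)+1) := by
    intro n
    have hn : (0:ℝ) < (n:ℝ)+1 := by positivity
    have h := dupp n
    have : u (n+1) = dist x (g^[n+1] x) / ((n:ℝ)+1) := by
      simp [hu]
    rw [this]
    rw [div_le_iff₀ hn]
    have : (E' + 2*P/((n:ℝ)+1)) * ((n:ℝ)+1) = ((n:ℝ)+1)*E' + 2*P := by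
      field_simp
    rw [this]
    exact h
  have hlow_u : ∀ n : ℕ, E ≤ u (n+1) := by
    intro n
    have hn : (0:ℝ) < (n:ℝ)+1 := by positivity
    have h := dlow n
    have hh : u (n+1) = dist x (g^[n+1] x) / ((n:ℝ)+1) := by simp [hu]
    rw [hh, le_div_iff₀ hn]
    linarith
  have hbdd_above : atTop.IsBoundedUnder (· ≤ ·) u := by
    refine isBoundedUnder_of ⟨E' + 2*P, fun n => ?_⟩
    have hE'pos : 0 ≤ E' + 2*P := by rw [hE']; linarith
    match n with
    | 0 => simpa [hu] using hE'pos
    | Nat.succ m =>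
      have h1 := hupp_u m
      have hn1 : (0:ℝ) < (m:ℝ)+1 := by positivity
      have h2 : 2*P/((m:ℝ)+1) ≤ 2*P := by
        rw [div_le_iff₀ hn1]
        nlinarith
      linarith
  have hcob : atTop.IsCoboundedUnder (· ≥ ·) u :=
    hbdd_above.isCoboundedUnder_ge
  -- liminf bounds
  have hliminf_low : E ≤ atTop.liminf u := by
    refine le_liminf_of_le (u := u) (f := atTop) hcob ?_
    filter_upwards [eventually_ge_atTop 1] with n hn
    obtain ⟨m, rfl⟩ := Nat.exists_eq_add_of_le hn
    have : (1 + m) = m + 1 := by ring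
    rw [this]
    exact hlow_u m
  have hliminf_upp : atTop.liminf u ≤ E' := by
    refine le_of_forall_pos_le_add ?_
    intro ε hε
    refine liminf_le_of_frequently_le ?_ hbdd_below
    refine Eventually.frequently ?_
    obtain ⟨N, hN⟩ := exists_nat_gt (2*P/ε)
    filter_upwards [eventually_ge_atTop (N+1)] with n hn
    obtain ⟨m, rfl⟩ := Nat.exists_eq_add_of_le hn
    have hrw : N + 1 + m = (N + m) + 1 := by omega
    rw [hrw]
    have h1 := hupp_u (N+m)
    push_cast at h1
    have hNpos : (0:ℝ) < (N:ℝ) + (m:ℝ) + 1 := by positivity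
    have h3 : 2*P < ε * (N:ℝ) := by
      have := (div_lt_iff₀ hε).mp hN
      linarith
    have h2 : 2*P/((N:ℝ)+(m:ℝ)+1) ≤ ε := by
      rw [div_le_iff₀ hNpos]
      have hm : (0:ℝ) ≤ (m:ℝ) := Nat.cast_nonneg m
      nlinarith
    linarith
  -- conclusion
  rw [hτ]
  rw [abs_le]
  constructor
  · have : L - 2*P - (4*δ + 4) ≤ E := by rw [hE]; linarith
    linarith
  · have : E' ≤ L - 2*P + (4*δ + 4) := by rw [hE']; linarith
    linarith
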